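/- Let f : ℝ^d → ℝ be differentiable, convex, bounded below, 𝐋-smooth for a symmetric positive semidefinite matrix 𝐋, and μ-strongly convex with μ > 0. Let R : ℝ^d → ℝ ∪ {+∞} be proper, convex and lower semicontinuous, and let x* be a minimizer of f + R. Let S be a proper sampling with sketch C, set C̄ = 𝐋^{1/2} C 𝐋^{†1/2}, L̄ = λmax(P̄ ∘ 𝐋) and L̃ = λmax(P̃ ∘ 𝐋), and let 0 < γ ≤ 1/(2 L̄). Define random iterates by a fixed x^0 and x^{k+1} = prox_{γR}(x^k − γ C̄_k ∇f(x^k)), where C̄_k = 𝐋^{1/2} C_k 𝐋^{†1/2} with C_0, C_1, … independent copies of C, and prox_{γR}(z) is the unique minimizer of u ↦ γ R(u) + ½ ‖u − z‖². Then for every k ≥ 0, E[‖x^k − x*‖²] ≤ (1 − γμ)^k ‖x^0 − x*‖² + (2 γ L̃ / μ) ‖∇f(x*)‖²_{𝐋†}. -/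

import Mathlib

open scoped BigOperators RealInnerProductSpace
open Matrix

noncomputable section

/-- A proper sampling on `{1,…,d}`: a finitely supported probability distribution over
subsets of `Fin d` whose marginal probabilities are all positive. -/
structure Sampling (d : ℕ) where
  prob : Finset (Fin d) → ℝ
  nonneg : ∀ S, 0 ≤ prob S
  total : ∑ S : Finset (Fin d), prob S = 1
  margPos : ∀ j : Fin d, 0 < ∑ S : Finset (Fin d), if j ∈ S then prob S else 0

namespace Sampling

variable {d : ℕ} (μ : Sampling d)

/-- Marginal probability `p_j = Prob(j ∈ S)`. -/
def marg (j : Fin d) : ℝ := ∑ S : Finset (Fin d), if j ∈ S then μ.prob S else 0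

/-- Probability matrix `P`, with entries `p_{jl} = Prob({j,l} ⊆ S)`. -/
def probMatrix : Matrix (Fin d) (Fin d) ℝ :=
  Matrix.of fun j l => ∑ S : Finset (Fin d), if j ∈ S ∧ l ∈ S then μ.prob S else 0

/-- The matrix `P̄` with entries `p_{jl}/(p_j p_l)`. -/
def Pbar : Matrix (Fin d) (Fin d) ℝ :=
  Matrix.of fun j l => μ.probMatrix j l / (μ.marg j * μ.marg l)

/-- The matrix `P̃ = P̄ − E` where `E` is the all-ones matrix. -/
def Ptilde : Matrix (Fin d) (Fin d) ℝ := μ.Pbar - Matrix.of fun _ _ => (1 : ℝ)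

/-- The unbiased diagonal sketch `C` associated with a realization `S` of the sampling. -/
def sketch (S : Finset (Fin d)) : Matrix (Fin d) (Fin d) ℝ :=
  Matrix.diagonal fun j => if j ∈ S then (μ.marg j)⁻¹ else 0

end Sampling

/-- Largest eigenvalue of a symmetric matrix, via the Rayleigh quotient. -/
def lambdaMax {d : ℕ} (M : Matrix (Fin d) (Fin d) ℝ) : ℝ :=
  sSup {r : ℝ | ∃ v : Fin d → ℝ, v ⬝ᵥ v = 1 ∧ r = v ⬝ᵥ M.mulVec v}

/-- Smallest eigenvalue of a symmetric matrix, via the Rayleigh quotient. -/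
def lambdaMin {d : ℕ} (M : Matrix (Fin d) (Fin d) ℝ) : ℝ :=
  sInf {r : ℝ | ∃ v : Fin d → ℝ, v ⬝ᵥ v = 1 ∧ r = v ⬝ᵥ M.mulVec v}

/-- `Mdag` is the Moore–Penrose pseudoinverse of `M`. -/
def IsMoorePenrose {m n : Type*} [Fintype m] [Fintype n]
    (M : Matrix m n ℝ) (Mdag : Matrix n m ℝ) : Prop :=
  M * Mdag * M = M ∧ Mdag * M * Mdag = Mdag ∧
    (M * Mdag)ᵀ = M * Mdag ∧ (Mdag * M)ᵀ = Mdag * M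

/-- Vectors in `ℝ^d` with the Euclidean inner product. -/
abbrev Vec (d : ℕ) := EuclideanSpace ℝ (Fin d)

/-- Action of a matrix on a Euclidean vector. -/
def mact {d e : ℕ} (M : Matrix (Fin e) (Fin d) ℝ) (x : Vec d) : Vec e :=
  Matrix.toEuclideanLin M x

/-- Quadratic form `xᵀ M x`, i.e. the squared `M`-seminorm `‖x‖²_M`. -/
def quad {d : ℕ} (M : Matrix (Fin d) (Fin d) ℝ) (x : Vec d) : ℝ := ⟪x, mact M x⟫

/-- `f` is `M`-smooth: `f x ≤ f y + ⟨∇f(y), x−y⟩ + ½ (x−y)ᵀ M (x−y)` for all `x, y`. -/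
def MSmooth {d : ℕ} (f : Vec d → ℝ) (M : Matrix (Fin d) (Fin d) ℝ) : Prop :=
  ∀ x y : Vec d, f x ≤ f y + ⟪gradient f y, x - y⟫ + (1 / 2) * quad M (x - y)

/-- Random iterates driven by i.i.d. draws: `traj x0 step k ω` is the `k`-th iterate along
the sample path `ω` of `k` draws. -/
def traj {V Ω : Type*} (x0 : V) (step : V → Ω → V) : ∀ k : ℕ, (Fin k → Ω) → V
  | 0, _ => x0
  | k + 1, ω => step (traj x0 step k fun i => ω i.castSucc) (ω (Fin.last k))

/-- Expectation `E[φ(x^k)]` of a functional of the `k`-th iterate, over `k` i.i.d. draws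
with one-step distribution `P`. -/
def trajExp {V Ω : Type*} [Fintype Ω] (P : Ω → ℝ) (x0 : V) (step : V → Ω → V)
    (φ : V → ℝ) (k : ℕ) : ℝ :=
  ∑ ω : Fin k → Ω, (∏ i, P (ω i)) * φ (traj x0 step k ω)


/-- `u` is the unique minimizer of `w ↦ γ R(w) + ½‖w − z‖²` (the proximal point of `z`). -/
def IsProxPt {d : ℕ} (R : Vec d → EReal) (γ : ℝ) (z u : Vec d) : Prop :=
  (∀ w : Vec d,
      (γ : EReal) * R u + ((1 / 2 * ‖u - z‖ ^ 2 : ℝ) : EReal)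
        ≤ (γ : EReal) * R w + ((1 / 2 * ‖w - z‖ ^ 2 : ℝ) : EReal)) ∧
  ∀ w : Vec d,
    (∀ w' : Vec d,
        (γ : EReal) * R w + ((1 / 2 * ‖w - z‖ ^ 2 : ℝ) : EReal)
          ≤ (γ : EReal) * R w' + ((1 / 2 * ‖w' - z‖ ^ 2 : ℝ) : EReal)) →
    w = u

/-- `R : ℝ^d → ℝ ∪ {+∞}` is proper, convex and lower semicontinuous. -/
def ProperConvexLsc {d : ℕ} (R : Vec d → EReal) : Prop :=
  (∀ x, R x ≠ ⊥) ∧ (∃ x, R x ≠ ⊤) ∧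
  (∀ x y : Vec d, ∀ a b : ℝ, 0 ≤ a → 0 ≤ b → a + b = 1 →
      R (a • x + b • y) ≤ (a : EReal) * R x + (b : EReal) * R y) ∧
  LowerSemicontinuous R

/-! ### Auxiliary lemmas for statement7 -/

lemma aux_le_of_forall_t (a b c : ℝ) (hc : 0 ≤ c)
    (h : ∀ t : ℝ, 0 < t → t ≤ 1 → a ≤ b + t * c) : a ≤ b := by
  by_contra hab
  push_neg at hab
  rcases eq_or_lt_of_le hc with hc0 | hc0
  · have := h 1 one_pos le_rfl
    rw [← hc0] at this
    linarith
  · have hab' : (0:ℝ) < a - b := by linarith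
    have ht1 : (0:ℝ) < (a - b) / (2 * c) := by positivity
    have h2 := h (min 1 ((a - b) / (2 * c))) (lt_min one_pos ht1) (min_le_left _ _)
    have h3 : min 1 ((a - b) / (2 * c)) * c ≤ ((a - b) / (2 * c)) * c :=
      mul_le_mul_of_nonneg_right (min_le_right _ _) hc
    have h4 : ((a - b) / (2 * c)) * c = (a - b) / 2 := by field_simp
    linarith

lemma aux_bddAbove {d : ℕ} (M : Matrix (Fin d) (Fin d) ℝ) :
    BddAbove {r : ℝ | ∃ v : Fin d → ℝ, v ⬝ᵥ v = 1 ∧ r = v ⬝ᵥ M.mulVec v} := by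
  refine ⟨∑ j : Fin d, ∑ l : Fin d, |M j l|, ?_⟩
  rintro r ⟨v, hv, rfl⟩
  have hvb : ∀ i, |v i| ≤ 1 := by
    intro i
    have h1 : v i * v i ≤ 1 := by
      rw [← hv]
      have : ∀ j ∈ Finset.univ, 0 ≤ v j * v j := fun j _ => mul_self_nonneg _
      calc v i * v i ≤ ∑ j, v j * v j := Finset.single_le_sum this (Finset.mem_univ i)
        _ = v ⬝ᵥ v := rfl
    nlinarith [abs_nonneg (v i), sq_abs (v i)]
  calc v ⬝ᵥ M.mulVec v ≤ |v ⬝ᵥ M.mulVec v| := le_abs_self _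
    _ ≤ ∑ j, |v j * (M.mulVec v) j| := Finset.abs_sum_le_sum_abs _ _
    _ ≤ ∑ j, ∑ l, |M j l| := by
        apply Finset.sum_le_sum
        intro j _
        rw [abs_mul]
        calc |v j| * |(M.mulVec v) j| ≤ 1 * |(M.mulVec v) j| :=
              mul_le_mul_of_nonneg_right (hvb j) (abs_nonneg _)
          _ = |∑ l, M j l * v l| := by rw [one_mul]; rfl
          _ ≤ ∑ l, |M j l * v l| := Finset.abs_sum_le_sum_abs _ _
          _ ≤ ∑ l, |M j l| := by
              apply Finset.sum_le_sum
              intro l _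
              rw [abs_mul]
              calc |M j l| * |v l| ≤ |M j l| * 1 :=
                    mul_le_mul_of_nonneg_left (hvb l) (abs_nonneg _)
                _ = |M j l| := mul_one _

lemma aux_mem_rayleigh {d : ℕ} (M : Matrix (Fin d) (Fin d) ℝ) (v : Fin d → ℝ)
    (hv : v ⬝ᵥ v = 1) : v ⬝ᵥ M.mulVec v ≤ lambdaMax M :=
  le_csSup (aux_bddAbove M) ⟨v, hv, rfl⟩

lemma aux_rayleigh_le {d : ℕ} (M : Matrix (Fin d) (Fin d) ℝ) (u : Fin d → ℝ) :
    u ⬝ᵥ M.mulVec u ≤ lambdaMax M * (u ⬝ᵥ u) := by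
  rcases eq_or_ne u 0 with rfl | hu
  · simp
  · have huu : 0 < u ⬝ᵥ u := by
      obtain ⟨i, hi⟩ := Function.ne_iff.mp hu
      have h2 : ∀ j ∈ Finset.univ, (0:ℝ) ≤ u j * u j := fun j _ => mul_self_nonneg _
      exact Finset.sum_pos' h2 ⟨i, Finset.mem_univ i, mul_self_pos.mpr hi⟩
    set n : ℝ := Real.sqrt (u ⬝ᵥ u) with hn
    have hn0 : 0 < n := Real.sqrt_pos.mpr huu
    have hn2 : n * n = u ⬝ᵥ u := Real.mul_self_sqrt huu.le
    set v : Fin d → ℝ := n⁻¹ • u with hvdef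
    have hvv : v ⬝ᵥ v = 1 := by
      rw [hvdef, smul_dotProduct, dotProduct_smul, smul_eq_mul, smul_eq_mul, ← hn2]
      field_simp
    have hvM : v ⬝ᵥ M.mulVec v = (n⁻¹ * n⁻¹) * (u ⬝ᵥ M.mulVec u) := by
      rw [hvdef, Matrix.mulVec_smul, smul_dotProduct, dotProduct_smul,
        smul_eq_mul, smul_eq_mul]
      ring
    have hle := aux_mem_rayleigh M v hvv
    rw [hvM] at hle
    have h5 : (n⁻¹ * n⁻¹) * (u ⬝ᵥ M.mulVec u) * (n * n) ≤ lambdaMax M * (n * n) :=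
      mul_le_mul_of_nonneg_right hle (by positivity)
    calc u ⬝ᵥ M.mulVec u = (n⁻¹ * n⁻¹) * (u ⬝ᵥ M.mulVec u) * (n * n) := by
          field_simp
        _ ≤ lambdaMax M * (n * n) := h5
        _ = lambdaMax M * (u ⬝ᵥ u) := by rw [hn2]

lemma aux_le_lambdaMax {d : ℕ} (hd : 0 < d) (M : Matrix (Fin d) (Fin d) ℝ) (c : ℝ)
    (h : ∀ u : Fin d → ℝ, c * (u ⬝ᵥ u) ≤ u ⬝ᵥ M.mulVec u) : c ≤ lambdaMax M := by
  set e : Fin d → ℝ := Pi.single ⟨0, hd⟩ 1 with he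
  have hee : e ⬝ᵥ e = 1 := by
    rw [he, dotProduct_single]
    simp
  have h1 := h e
  rw [hee, mul_one] at h1
  exact h1.trans (aux_mem_rayleigh M e hee)

/-- The entries of the sketch diagonal. -/
def bbf {d : ℕ} (μs : Sampling d) (S : Finset (Fin d)) : Fin d → ℝ :=
  fun j => if j ∈ S then (μs.marg j)⁻¹ else 0

lemma aux_sketch_mulVec {d : ℕ} (μs : Sampling d) (S : Finset (Fin d)) (q : Fin d → ℝ) :
    (μs.sketch S).mulVec q = fun j => bbf μs S j * q j := by
  funext j
  rw [Sampling.sketch, Matrix.mulVec_diagonal]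
  rfl

lemma aux_marg_pos {d : ℕ} (μs : Sampling d) (j : Fin d) : 0 < μs.marg j := μs.margPos j

lemma aux_moment1 {d : ℕ} (μs : Sampling d) (j : Fin d) :
    ∑ S : Finset (Fin d), μs.prob S * bbf μs S j = 1 := by
  have h1 : ∀ S : Finset (Fin d), μs.prob S * bbf μs S j
      = (if j ∈ S then μs.prob S else 0) * (μs.marg j)⁻¹ := by
    intro S
    by_cases h : j ∈ S <;> simp [bbf, h]
  simp only [h1]
  rw [← Finset.sum_mul]
  have h2 : (∑ S : Finset (Fin d), if j ∈ S then μs.prob S else 0) = μs.marg j := rfl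
  rw [h2, mul_inv_cancel₀ (aux_marg_pos μs j).ne']

lemma aux_moment2 {d : ℕ} (μs : Sampling d) (j l : Fin d) :
    ∑ S : Finset (Fin d), μs.prob S * (bbf μs S j * bbf μs S l) = μs.Pbar j l := by
  have h1 : ∀ S : Finset (Fin d), μs.prob S * (bbf μs S j * bbf μs S l)
      = (if j ∈ S ∧ l ∈ S then μs.prob S else 0) * ((μs.marg j)⁻¹ * (μs.marg l)⁻¹) := by
    intro S
    by_cases hj : j ∈ S <;> by_cases hl : l ∈ S <;> simp [bbf, hj, hl] <;> ring
  simp only [h1]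
  rw [← Finset.sum_mul]
  have h2 : (∑ S : Finset (Fin d), if j ∈ S ∧ l ∈ S then μs.prob S else 0)
      = μs.probMatrix j l := rfl
  rw [h2, Sampling.Pbar]
  show μs.probMatrix j l * ((μs.marg j)⁻¹ * (μs.marg l)⁻¹)
      = μs.probMatrix j l / (μs.marg j * μs.marg l)
  rw [div_eq_mul_inv, mul_inv]

lemma aux_Ptilde_apply {d : ℕ} (μs : Sampling d) (j l : Fin d) :
    μs.Ptilde j l = μs.Pbar j l - 1 := by
  simp [Sampling.Ptilde]

lemma aux_moment2t {d : ℕ} (μs : Sampling d) (j l : Fin d) :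
    ∑ S : Finset (Fin d), μs.prob S * ((bbf μs S j - 1) * (bbf μs S l - 1)) = μs.Ptilde j l := by
  have h1 : ∀ S : Finset (Fin d), μs.prob S * ((bbf μs S j - 1) * (bbf μs S l - 1))
      = μs.prob S * (bbf μs S j * bbf μs S l) - μs.prob S * bbf μs S j
        - μs.prob S * bbf μs S l + μs.prob S := by
    intro S; ring
  simp only [h1]
  rw [Finset.sum_add_distrib, Finset.sum_sub_distrib, Finset.sum_sub_distrib,
    aux_moment2, aux_moment1, aux_moment1, μs.total, aux_Ptilde_apply]
  ring

lemma aux_exp_quad {d : ℕ} {Ω : Type*} [Fintype Ω] (p : Ω → ℝ) (w : Ω → Fin d → ℝ)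
    (Mm LL : Matrix (Fin d) (Fin d) ℝ)
    (hm : ∀ j l, ∑ S : Ω, p S * (w S j * w S l) = Mm j l) (q : Fin d → ℝ) :
    ∑ S : Ω, p S * ((fun j => w S j * q j) ⬝ᵥ LL.mulVec (fun j => w S j * q j))
      = q ⬝ᵥ (Matrix.hadamard Mm LL).mulVec q := by
  have lhs : ∑ S : Ω, p S * ((fun j => w S j * q j) ⬝ᵥ LL.mulVec (fun j => w S j * q j))
      = ∑ j, ∑ l, ∑ S : Ω, p S * ((w S j * q j) * (LL j l * (w S l * q l))) := by
    simp only [dotProduct, Matrix.mulVec, Finset.mul_sum]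
    rw [Finset.sum_comm]
    refine Finset.sum_congr rfl fun j _ => ?_
    rw [Finset.sum_comm]
  rw [lhs]
  have rhs : q ⬝ᵥ (Matrix.hadamard Mm LL).mulVec q
      = ∑ j, ∑ l, (Mm j l) * (q j * (LL j l * q l)) := by
    simp only [dotProduct, Matrix.mulVec, Matrix.hadamard_apply, Finset.mul_sum]
    refine Finset.sum_congr rfl fun j _ => Finset.sum_congr rfl fun l _ => by ring
  rw [rhs]
  refine Finset.sum_congr rfl fun j _ => Finset.sum_congr rfl fun l _ => ?_
  rw [← hm j l, Finset.sum_mul]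
  refine Finset.sum_congr rfl fun S _ => by ring

lemma aux_exp_lin {d : ℕ} {Ω : Type*} [Fintype Ω] (p : Ω → ℝ) (w : Ω → Fin d → ℝ)
    (hm : ∀ m, ∑ S : Ω, p S * w S m = 1) (Lh : Matrix (Fin d) (Fin d) ℝ) (v q : Fin d → ℝ) :
    ∑ S : Ω, p S * (v ⬝ᵥ Lh.mulVec (fun m => w S m * q m)) = v ⬝ᵥ Lh.mulVec q := by
  have lhs : ∑ S : Ω, p S * (v ⬝ᵥ Lh.mulVec (fun m => w S m * q m))
      = ∑ j, ∑ m, ∑ S : Ω, p S * (v j * (Lh j m * (w S m * q m))) := by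
    simp only [dotProduct, Matrix.mulVec, Finset.mul_sum]
    rw [Finset.sum_comm]
    refine Finset.sum_congr rfl fun j _ => ?_
    rw [Finset.sum_comm]
  rw [lhs]
  have rhs : v ⬝ᵥ Lh.mulVec q = ∑ j, ∑ m, (v j * (Lh j m * q m)) := by
    simp only [dotProduct, Matrix.mulVec, Finset.mul_sum]
  rw [rhs]
  refine Finset.sum_congr rfl fun j _ => Finset.sum_congr rfl fun m _ => ?_
  rw [← mul_one (v j * (Lh j m * q m)), ← hm m, Finset.mul_sum]
  refine Finset.sum_congr rfl fun S _ => by ring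

lemma trajExp_zero {V Ω : Type*} [Fintype Ω] (P : Ω → ℝ) (x0 : V) (step : V → Ω → V)
    (φ : V → ℝ) : trajExp P x0 step φ 0 = φ x0 := by
  rw [trajExp, Fintype.sum_unique]
  simp [traj]

lemma traj_snoc {V Ω : Type*} (x0 : V) (step : V → Ω → V) (k : ℕ) (ω : Fin k → Ω) (s : Ω) :
    traj x0 step (k+1) (Fin.snoc ω s) = step (traj x0 step k ω) s := by
  show step (traj x0 step k fun i => (Fin.snoc ω s : Fin (k+1) → Ω) i.castSucc)
      ((Fin.snoc ω s : Fin (k+1) → Ω) (Fin.last k)) = _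
  simp [Fin.snoc_castSucc, Fin.snoc_last]

lemma trajExp_succ {V Ω : Type*} [Fintype Ω] (P : Ω → ℝ) (x0 : V) (step : V → Ω → V)
    (φ : V → ℝ) (k : ℕ) :
    trajExp P x0 step φ (k+1)
      = ∑ ω : Fin k → Ω, (∏ i, P (ω i)) *
          (∑ s : Ω, P s * φ (step (traj x0 step k ω) s)) := by
  rw [trajExp, ← Equiv.sum_comp (Fin.snocEquiv (fun _ => Ω)), Fintype.sum_prod_type,
    Finset.sum_comm]
  refine Finset.sum_congr rfl fun ω _ => ?_
  rw [Finset.mul_sum]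
  refine Finset.sum_congr rfl fun s _ => ?_
  have h1 : (Fin.snocEquiv (fun _ => Ω)) (s, ω) = Fin.snoc ω s := rfl
  rw [h1, traj_snoc, Fin.prod_univ_castSucc]
  simp only [Fin.snoc_castSucc, Fin.snoc_last]
  ring

lemma aux_sum_prod_one {Ω : Type*} [Fintype Ω] (P : Ω → ℝ) (hP : ∑ s : Ω, P s = 1) (k : ℕ) :
    ∑ ω : Fin k → Ω, (∏ i, P (ω i)) = 1 := by
  rw [← Fintype.piFinset_univ, ← Finset.prod_univ_sum]
  simp [hP]

lemma aux_norm_comb {d : ℕ} (p q : Vec d) (t : ℝ) :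
    ‖p + t • q‖ ^ 2 = ‖p‖ ^ 2 + 2 * (t * ⟪p, q⟫) + t ^ 2 * ‖q‖ ^ 2 := by
  rw [norm_add_sq_real, real_inner_smul_right, norm_smul]
  simp [mul_pow, sq_abs]

lemma aux_norm_comb' {d : ℕ} (p q : Vec d) (t : ℝ) :
    ‖p - t • q‖ ^ 2 = ‖p‖ ^ 2 - 2 * (t * ⟪p, q⟫) + t ^ 2 * ‖q‖ ^ 2 := by
  have h : p - t • q = p + (-t) • q := by module
  rw [h, aux_norm_comb]
  ring

lemma aux_sq_add {d : ℕ} (a b : Vec d) : ‖a + b‖ ^ 2 ≤ 2 * ‖a‖ ^ 2 + 2 * ‖b‖ ^ 2 := by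
  nlinarith [norm_add_sq_real a b, real_inner_le_norm a b, sq_nonneg (‖a‖ - ‖b‖),
    norm_nonneg a, norm_nonneg b]

section prox
variable {d : ℕ} {R : Vec d → EReal} (hR : ProperConvexLsc R) {γ : ℝ} (hγ : 0 < γ)

include hR hγ in
lemma prox_ne_top {z u : Vec d} (hu : IsProxPt R γ z u) : R u ≠ ⊤ := by
  intro htop
  obtain ⟨x₀, hx₀⟩ := hR.2.1
  have h1 := hu.1 x₀
  rw [htop, EReal.coe_mul_top_of_pos hγ, EReal.top_add_coe] at h1
  have hx₀' : R x₀ = ((R x₀).toReal : EReal) := (EReal.coe_toReal hx₀ (hR.1 x₀)).symm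
  rw [hx₀'] at h1
  have h2 : ((γ : EReal) * (((R x₀).toReal : ℝ) : EReal) + ((1 / 2 * ‖x₀ - z‖ ^ 2 : ℝ) : EReal))
      = ((γ * (R x₀).toReal + 1 / 2 * ‖x₀ - z‖ ^ 2 : ℝ) : EReal) := by push_cast; ring
  rw [h2] at h1
  exact (EReal.coe_lt_top _).not_ge h1

include hR hγ in
lemma prox_varineq {z u : Vec d} (hu : IsProxPt R γ z u) (w : Vec d) (b : ℝ)
    (hwb : R w = (b : EReal)) :
    γ * ((R u).toReal - b) ≤ ⟪u - z, w - u⟫ := by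
  set a := (R u).toReal with ha
  have hua : R u = (a : EReal) := (EReal.coe_toReal (prox_ne_top hR hγ hu) (hR.1 u)).symm
  apply aux_le_of_forall_t _ _ (1/2 * ‖w - u‖^2) (by positivity)
  intro t ht0 ht1
  set wt : Vec d := (1 - t) • u + t • w with hwt
  have hconv := hR.2.2.1 u w (1 - t) t (by linarith) ht0.le (by ring)
  rw [hua, hwb] at hconv
  have hconv' : R wt ≤ (((1-t) * a + t * b : ℝ) : EReal) := by
    refine le_trans hconv ?_
    push_cast
    exact le_rfl
  have hwtt : R wt ≠ ⊤ := fun h => by rw [h] at hconv'; exact (EReal.coe_lt_top _).not_ge hconv'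
  set r := (R wt).toReal with hrdef
  have hwtr : R wt = (r : EReal) := (EReal.coe_toReal hwtt (hR.1 wt)).symm
  have hrle : r ≤ (1-t) * a + t * b := by
    rw [hwtr] at hconv'; exact_mod_cast hconv'
  have h2 := hu.1 wt
  rw [hua, hwtr] at h2
  have h2r : γ * a + 1/2 * ‖u - z‖^2 ≤ γ * r + 1/2 * ‖wt - z‖^2 := by
    have e1 : ((γ : EReal) * (a : EReal) + ((1 / 2 * ‖u - z‖ ^ 2 : ℝ) : EReal))
        = ((γ * a + 1/2 * ‖u - z‖^2 : ℝ) : EReal) := by push_cast; ring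
    have e2 : ((γ : EReal) * (r : EReal) + ((1 / 2 * ‖wt - z‖ ^ 2 : ℝ) : EReal))
        = ((γ * r + 1/2 * ‖wt - z‖^2 : ℝ) : EReal) := by push_cast; ring
    rw [e1, e2] at h2
    exact_mod_cast h2
  have hwtz : wt - z = (u - z) + t • (w - u) := by
    rw [hwt]
    module
  have hnorm : ‖wt - z‖^2 = ‖u - z‖^2 + 2 * (t * ⟪u - z, w - u⟫) + t^2 * ‖w - u‖^2 := by
    rw [hwtz, aux_norm_comb]
  have h3 : t * (γ * (a - b)) ≤ t * (⟪u - z, w - u⟫ + t * (1/2 * ‖w - u‖^2)) := by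
    have h4 : γ * r ≤ γ * ((1-t) * a + t * b) := mul_le_mul_of_nonneg_left hrle hγ.le
    rw [hnorm] at h2r
    nlinarith [h2r, h4]
  exact (mul_le_mul_iff_right₀ ht0).mp h3

include hR hγ in
lemma prox_dist {z z' u u' : Vec d} (hu : IsProxPt R γ z u) (hu' : IsProxPt R γ z' u') :
    ‖u - u'‖ ≤ ‖z - z'‖ := by
  have ha' : R u' = (((R u').toReal : ℝ) : EReal) :=
    (EReal.coe_toReal (prox_ne_top hR hγ hu') (hR.1 u')).symm
  have ha : R u = (((R u).toReal : ℝ) : EReal) :=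
    (EReal.coe_toReal (prox_ne_top hR hγ hu) (hR.1 u)).symm
  have h1 := prox_varineq hR hγ hu u' ((R u').toReal) ha'
  have h2 := prox_varineq hR hγ hu' u ((R u).toReal) ha
  have h3 : (0:ℝ) ≤ ⟪u - z, u' - u⟫ + ⟪u' - z', u - u'⟫ := by linarith
  have h4 : ⟪u - z, u' - u⟫ + ⟪u' - z', u - u'⟫
      = - (‖u - u'‖^2) + ⟪z - z', u - u'⟫ := by
    rw [show (u':Vec d) - u = -(u - u') by module, inner_neg_right]
    rw [show (u:Vec d) - z = -(z - u) by module, inner_neg_left]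
    rw [show (u':Vec d) - z' = -(z' - u') by module, inner_neg_left]
    rw [show ⟪z - u, u - u'⟫ = ⟪z - z', u - u'⟫ + ⟪z' - u, u - u'⟫ by
      rw [← inner_add_left]; congr 1; module]
    rw [show ⟪z' - u', u - u'⟫ = ⟪z' - u, u - u'⟫ + ⟪u - u', u - u'⟫ by
      rw [← inner_add_left]; congr 1; module]
    rw [real_inner_self_eq_norm_sq]
    ring
  have h5 : ‖u - u'‖^2 ≤ ⟪z - z', u - u'⟫ := by linarith
  have h6 : ⟪z - z', u - u'⟫ ≤ ‖z - z'‖ * ‖u - u'‖ := real_inner_le_norm _ _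
  rcases eq_or_lt_of_le (norm_nonneg (u - u')) with h0 | h0
  · rw [← h0]; exact norm_nonneg _
  · have h7 : ‖u - u'‖ * ‖u - u'‖ ≤ ‖z - z'‖ * ‖u - u'‖ := by
      rw [← pow_two]; exact h5.trans h6
    exact le_of_mul_le_mul_right h7 h0

end prox
lemma aux_inner_dot {d : ℕ} (x y : Vec d) :
    ⟪x, y⟫ = (fun i => x i) ⬝ᵥ (fun i => y i) := by
  simp [PiLp.inner_apply, dotProduct, mul_comm]

lemma aux_norm_sq_dot {d : ℕ} (x : Vec d) :
    ‖x‖^2 = (fun i => x i) ⬝ᵥ (fun i => x i) := by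
  rw [← real_inner_self_eq_norm_sq, aux_inner_dot]

lemma aux_inner_mact {d : ℕ} (M : Matrix (Fin d) (Fin d) ℝ) (x y : Vec d) :
    ⟪x, mact M y⟫ = (fun i => x i) ⬝ᵥ M.mulVec (fun i => y i) := by
  simp [PiLp.inner_apply, dotProduct]
  exact Finset.sum_congr rfl fun i _ => mul_comm _ _

lemma aux_quad_dot {d : ℕ} (M : Matrix (Fin d) (Fin d) ℝ) (x : Vec d) :
    quad M x = (fun i => x i) ⬝ᵥ M.mulVec (fun i => x i) :=
  aux_inner_mact M x x

lemma aux_mact_coords {d : ℕ} (M : Matrix (Fin d) (Fin d) ℝ) (x : Vec d) :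
    (fun i => mact M x i) = M.mulVec (fun i => x i) := rfl

lemma aux_mact_mul {d : ℕ} (A B : Matrix (Fin d) (Fin d) ℝ) (x : Vec d) :
    mact (A * B) x = mact A (mact B x) := by
  apply (WithLp.equiv 2 (Fin d → ℝ)).injective
  funext i
  show ((A * B).mulVec (fun i => x i)) i = (A.mulVec (fun i => mact B x i)) i
  rw [aux_mact_coords, Matrix.mulVec_mulVec]

lemma aux_mact_one {d : ℕ} (x : Vec d) : mact (1 : Matrix (Fin d) (Fin d) ℝ) x = x := by
  apply (WithLp.equiv 2 (Fin d → ℝ)).injective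
  funext i
  show ((1 : Matrix (Fin d) (Fin d) ℝ).mulVec (fun i => x i)) i = x i
  rw [Matrix.one_mulVec]

lemma aux_mact_sub {d : ℕ} (M : Matrix (Fin d) (Fin d) ℝ) (x y : Vec d) :
    mact M (x - y) = mact M x - mact M y := by
  rw [mact, mact, mact, map_sub]

lemma aux_quad_smul {d : ℕ} (M : Matrix (Fin d) (Fin d) ℝ) (t : ℝ) (x : Vec d) :
    quad M (t • x) = t^2 * quad M x := by
  rw [quad, quad, mact, _root_.map_smul, real_inner_smul_left, real_inner_smul_right]
  show t * (t * ⟪x, mact M x⟫) = _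
  ring

lemma aux_sym_dot {d : ℕ} {N M : Matrix (Fin d) (Fin d) ℝ} (hNT : Nᵀ = N)
    (hN2 : N * N = M) (a b : Fin d → ℝ) :
    (N.mulVec a) ⬝ᵥ (N.mulVec b) = a ⬝ᵥ M.mulVec b := by
  have hMT : Mᵀ = M := by rw [← hN2, Matrix.transpose_mul, hNT, hN2]
  rw [Matrix.dotProduct_mulVec, ← Matrix.mulVec_transpose, hNT, Matrix.mulVec_mulVec, hN2]
  rw [dotProduct_comm, Matrix.dotProduct_mulVec, ← Matrix.mulVec_transpose, hMT]
  exact dotProduct_comm _ _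
set_option maxHeartbeats 2000000 in
/-- CGD+ convergence. -/
theorem statement7 {d : ℕ} (μsamp : Sampling d) (f : Vec d → ℝ)
    (LL Lh Ldag Ldh : Matrix (Fin d) (Fin d) ℝ)
    (hLL : LL.PosSemidef) (hLh : Lh.PosSemidef) (hLh2 : Lh * Lh = LL)
    (hdag : IsMoorePenrose LL Ldag) (hLdh : Ldh.PosSemidef) (hLdh2 : Ldh * Ldh = Ldag)
    (hdiff : Differentiable ℝ f) (hconv : ConvexOn ℝ Set.univ f)
    (hbdd : BddBelow (Set.range f)) (hsmooth : MSmooth f LL)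
    (mu : ℝ) (hmu : 0 < mu)
    (hsc : ∀ x y : Vec d, f y + ⟪gradient f y, x - y⟫ + mu / 2 * ‖x - y‖ ^ 2 ≤ f x)
    (R : Vec d → EReal) (hR : ProperConvexLsc R)
    (xstar : Vec d) (hmin : ∀ x : Vec d, (f xstar : EReal) + R xstar ≤ (f x : EReal) + R x)
    (γ : ℝ) (hγ : 0 < γ) (hγ' : γ ≤ 1 / (2 * lambdaMax (Matrix.hadamard μsamp.Pbar LL)))
    (proxR : Vec d → Vec d) (hprox : ∀ z : Vec d, IsProxPt R γ z (proxR z))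
    (x0 : Vec d) :
    ∀ k : ℕ,
      trajExp μsamp.prob x0
          (fun x S => proxR (x - γ • mact (Lh * μsamp.sketch S * Ldh) (gradient f x)))
          (fun x => ‖x - xstar‖ ^ 2) k
        ≤ (1 - γ * mu) ^ k * ‖x0 - xstar‖ ^ 2
          + 2 * γ * lambdaMax (Matrix.hadamard μsamp.Ptilde LL) / mu
              * quad Ldag (gradient f xstar) := by
  intro k
  -- dispatch the degenerate case d = 0
  rcases Nat.eq_zero_or_pos d with hd0 | hd
  · exfalso
    subst hd0
    have hempty : {r : ℝ | ∃ v : Fin 0 → ℝ, v ⬝ᵥ v = 1 ∧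
        r = v ⬝ᵥ (Matrix.hadamard μsamp.Pbar LL).mulVec v} = ∅ := by
      ext r
      simp only [Set.mem_setOf_eq, Set.mem_empty_iff_false, iff_false, not_exists]
      intro v hv
      have h0 : v ⬝ᵥ v = 0 := by simp [dotProduct]
      rw [h0] at hv
      exact absurd hv.1 (by norm_num)
    have hz : lambdaMax (Matrix.hadamard μsamp.Pbar LL) = 0 := by
      rw [lambdaMax, hempty, Real.sSup_empty]
    rw [hz] at hγ'
    norm_num at hγ'
    linarith
  -- notation
  set gs : Vec d := gradient f xstar with hgs
  set Lb : ℝ := lambdaMax (Matrix.hadamard μsamp.Pbar LL) with hLbdef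
  set Lt : ℝ := lambdaMax (Matrix.hadamard μsamp.Ptilde LL) with hLtdef
  set Qs : ℝ := quad Ldag gs with hQsdef
  -- basic plain PSD facts
  have hLLdot : ∀ u : Fin d → ℝ, 0 ≤ u ⬝ᵥ LL.mulVec u := by
    intro u; have := hLL.dotProduct_mulVec_nonneg u; simpa using this
  -- strong convexity vs smoothness
  have hmuq : ∀ hv : Vec d, mu * ‖hv‖^2 ≤ quad LL hv := by
    intro hv
    have h1 := hsmooth (hv + xstar) xstar
    have h2 := hsc (hv + xstar) xstar
    have e : (hv + xstar) - xstar = hv := by module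
    rw [e] at h1 h2
    linarith
  have hmudot : ∀ u : Fin d → ℝ, mu * (u ⬝ᵥ u) ≤ u ⬝ᵥ LL.mulVec u := by
    intro u
    have h1 := hmuq ((WithLp.equiv 2 (Fin d → ℝ)).symm u)
    rw [aux_quad_dot, aux_norm_sq_dot] at h1
    exact h1
  have hLLpd : LL.PosDef := by
    refine Matrix.PosDef.of_dotProduct_mulVec_pos hLL.1 fun u hu => ?_
    have h1 : 0 < u ⬝ᵥ u := by
      obtain ⟨i, hi⟩ := Function.ne_iff.mp hu
      exact Finset.sum_pos' (fun j _ => mul_self_nonneg _)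
        ⟨i, Finset.mem_univ i, mul_self_pos.mpr hi⟩
    have h2 := hmudot u
    have h3 : 0 < u ⬝ᵥ LL.mulVec u := lt_of_lt_of_le (by positivity) h2
    simpa using h3
  have hdetLL : IsUnit LL.det := (Matrix.isUnit_iff_isUnit_det LL).mp hLLpd.isUnit
  have hinv1 : LL * LL⁻¹ = 1 := Matrix.mul_nonsing_inv _ hdetLL
  have hinv2 : LL⁻¹ * LL = 1 := Matrix.nonsing_inv_mul _ hdetLL
  have hLdagEq : Ldag = LL⁻¹ := by
    have h1 := hdag.1
    calc Ldag = 1 * Ldag * 1 := by rw [one_mul, mul_one]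
      _ = (LL⁻¹ * LL) * Ldag * (LL * LL⁻¹) := by rw [hinv2, hinv1]
      _ = LL⁻¹ * (LL * Ldag * LL) * LL⁻¹ := by
          simp only [Matrix.mul_assoc]
      _ = LL⁻¹ * LL * LL⁻¹ := by rw [h1, Matrix.mul_assoc]
      _ = LL⁻¹ := by rw [hinv2, one_mul]
  have hdetLh : IsUnit Lh.det := by
    have h1 : Lh.det * Lh.det = LL.det := by rw [← Matrix.det_mul, hLh2]
    refine isUnit_iff_ne_zero.mpr fun h => ?_
    rw [h, mul_zero] at h1
    exact hdetLL.ne_zero h1.symm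
  have hLhinv1 : Lh * Lh⁻¹ = 1 := Matrix.mul_nonsing_inv _ hdetLh
  have hLhPD : Lh.PosDef := by
    refine Matrix.PosDef.of_dotProduct_mulVec_pos hLh.1 fun u hu => ?_
    have h0 : 0 ≤ u ⬝ᵥ Lh.mulVec u := by have := hLh.dotProduct_mulVec_nonneg u; simpa using this
    rcases eq_or_lt_of_le h0 with he | hlt
    · exfalso
      have h1 : Lh.mulVec u = 0 := by
        rw [← hLh.dotProduct_mulVec_zero_iff]
        simpa using he.symm
      have h2 : LL.mulVec u = 0 := by
        rw [← hLh2, ← Matrix.mulVec_mulVec, h1, Matrix.mulVec_zero]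
      have h3 : u = 0 := by
        have h4 := congrArg (LL⁻¹.mulVec) h2
        rwa [Matrix.mulVec_mulVec, hinv2, Matrix.one_mulVec, Matrix.mulVec_zero] at h4
      exact hu h3
    · simpa using hlt
  have hLdhEq : Ldh = Lh⁻¹ := by
    open scoped MatrixOrder in apply (CFC.sq_eq_sq_iff Ldh Lh⁻¹ (Matrix.nonneg_iff_posSemidef.mpr hLdh) (Matrix.nonneg_iff_posSemidef.mpr hLhPD.inv.posSemidef)).mp
    rw [pow_two, pow_two, hLdh2, hLdagEq, ← hLh2, Matrix.mul_inv_rev]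
  have hLhLdh : Lh * Ldh = 1 := by rw [hLdhEq]; exact hLhinv1
  have hLLLdag : LL * Ldag = 1 := by rw [hLdagEq]; exact hinv1
  have hLdagPSD : Ldag.PosSemidef := by rw [hLdagEq]; exact hLLpd.inv.posSemidef
  -- transposes
  have hLhT : Lhᵀ = Lh := by
    have h1 := hLh.1
    rw [Matrix.IsHermitian] at h1
    simpa using h1
  have hLdhT : Ldhᵀ = Ldh := by
    have h1 := hLdh.1
    rw [Matrix.IsHermitian] at h1
    simpa using h1
  have hdotLh : ∀ a b : Fin d → ℝ, (Lh.mulVec a) ⬝ᵥ (Lh.mulVec b) = a ⬝ᵥ LL.mulVec b :=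
    aux_sym_dot hLhT hLh2
  have hdotLdh : ∀ a b : Fin d → ℝ, (Ldh.mulVec a) ⬝ᵥ (Ldh.mulVec b) = a ⬝ᵥ Ldag.mulVec b :=
    aux_sym_dot hLdhT hLdh2
  -- lambda facts
  have hPt0 : ∀ q : Fin d → ℝ, 0 ≤ q ⬝ᵥ (Matrix.hadamard μsamp.Ptilde LL).mulVec q := by
    intro q
    rw [← aux_exp_quad μsamp.prob (fun S m => bbf μsamp S m - 1) μsamp.Ptilde LL
      (aux_moment2t μsamp) q]
    exact Finset.sum_nonneg fun S _ => mul_nonneg (μsamp.nonneg S) (hLLdot _)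
  have hsplit : Matrix.hadamard μsamp.Pbar LL = LL + Matrix.hadamard μsamp.Ptilde LL := by
    ext j l
    rw [Matrix.add_apply, Matrix.hadamard_apply, Matrix.hadamard_apply, aux_Ptilde_apply]
    ring
  have hPbge : ∀ q : Fin d → ℝ, mu * (q ⬝ᵥ q) ≤ q ⬝ᵥ (Matrix.hadamard μsamp.Pbar LL).mulVec q := by
    intro q
    rw [hsplit, Matrix.add_mulVec, dotProduct_add]
    have h1 := hmudot q
    have h2 := hPt0 q
    linarith
  have hmuLb : mu ≤ Lb := aux_le_lambdaMax hd _ mu hPbge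
  have hLb0 : 0 < Lb := lt_of_lt_of_le hmu hmuLb
  have hLt0 : 0 ≤ Lt := aux_le_lambdaMax hd _ 0 (fun u => by simpa using hPt0 u)
  have hγLb : 2 * γ * Lb ≤ 1 := by
    have h1 := (le_div_iff₀ (by positivity : (0:ℝ) < 2 * Lb)).mp hγ'
    linarith
  have hγmu1 : γ * mu ≤ 1 := by nlinarith
  have hβ0 : 0 ≤ 1 - γ * mu := by nlinarith
  -- R xstar is finite
  obtain ⟨x₀, hx₀⟩ := hR.2.1
  have hRxs : R xstar ≠ ⊤ := by
    intro htop
    have h1 := hmin x₀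
    rw [htop] at h1
    rw [EReal.add_top_of_ne_bot (by exact EReal.coe_ne_bot _)] at h1
    have hx₀' : R x₀ = ((R x₀).toReal : EReal) := (EReal.coe_toReal hx₀ (hR.1 x₀)).symm
    rw [hx₀'] at h1
    have h2 : ((f x₀ : ℝ) : EReal) + (((R x₀).toReal : ℝ) : EReal)
        = ((f x₀ + (R x₀).toReal : ℝ) : EReal) := by push_cast; ring
    rw [h2] at h1
    exact (EReal.coe_lt_top _).not_ge h1
  set as : ℝ := (R xstar).toReal with hasdef
  have hRxs' : R xstar = (as : EReal) := (EReal.coe_toReal hRxs (hR.1 xstar)).symm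
  -- gradient inequality at xstar
  have hgradineq : ∀ w : Vec d, ∀ b : ℝ, R w = (b : EReal) → as - b ≤ ⟪gs, w - xstar⟫ := by
    intro w b hwb
    have hqnn : (0:ℝ) ≤ 1/2 * quad LL (w - xstar) := by
      have := hmuq (w - xstar)
      nlinarith [norm_nonneg (w - xstar), sq_nonneg ‖w - xstar‖]
    apply aux_le_of_forall_t _ _ (1/2 * quad LL (w - xstar)) hqnn
    intro t ht0 ht1
    set wt : Vec d := (1 - t) • xstar + t • w with hwt
    have hconv2 := hR.2.2.1 xstar w (1-t) t (by linarith) ht0.le (by ring)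
    rw [hRxs', hwb] at hconv2
    have hconv' : R wt ≤ (((1-t) * as + t * b : ℝ) : EReal) := by
      refine le_trans hconv2 ?_
      push_cast
      exact le_rfl
    have hwtt : R wt ≠ ⊤ := fun h => by
      rw [h] at hconv'; exact (EReal.coe_lt_top _).not_ge hconv'
    set r := (R wt).toReal with hrdef
    have hwtr : R wt = (r : EReal) := (EReal.coe_toReal hwtt (hR.1 wt)).symm
    have hrle : r ≤ (1-t) * as + t * b := by
      rw [hwtr] at hconv'; exact_mod_cast hconv'
    have hminwt := hmin wt
    rw [hRxs', hwtr] at hminwt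
    have hminr : f xstar + as ≤ f wt + r := by exact_mod_cast hminwt
    have hsm := hsmooth wt xstar
    have hwtx : wt - xstar = t • (w - xstar) := by rw [hwt]; module
    rw [hwtx, real_inner_smul_right, aux_quad_smul] at hsm
    rw [← hgs] at hsm
    have h5 : t * (as - b) ≤ t * (⟪gs, w - xstar⟫ + t * (1/2 * quad LL (w - xstar))) := by
      nlinarith [hsm, hminr, hrle]
    exact (mul_le_mul_iff_right₀ ht0).mp h5
  -- fixed point of the prox map
  set zs : Vec d := xstar - γ • gs with hzs
  have hfix : xstar = proxR zs := by
    apply (hprox zs).2 xstar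
    intro w'
    rcases eq_or_ne (R w') ⊤ with htop | hne
    · rw [htop, EReal.coe_mul_top_of_pos hγ, EReal.top_add_coe]
      exact le_top
    · set b := (R w').toReal with hbdef
      have hwb : R w' = (b : EReal) := (EReal.coe_toReal hne (hR.1 w')).symm
      rw [hRxs', hwb]
      have hgoal : γ * as + 1/2 * ‖xstar - zs‖^2 ≤ γ * b + 1/2 * ‖w' - zs‖^2 := by
        have h1 : as - b ≤ ⟪gs, w' - xstar⟫ := hgradineq w' b hwb
        have h2 : ‖xstar - zs‖^2 = γ^2 * ‖gs‖^2 := by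
          have e : xstar - zs = γ • gs := by rw [hzs]; module
          rw [e, norm_smul]
          simp [mul_pow, sq_abs]
        have h3 : ‖w' - zs‖^2 = ‖w' - xstar‖^2 + 2*(γ*⟪w' - xstar, gs⟫) + γ^2*‖gs‖^2 := by
          have e : w' - zs = (w' - xstar) + γ • gs := by rw [hzs]; module
          rw [e, aux_norm_comb]
        have h4 : γ*(as - b) ≤ γ * ⟪gs, w' - xstar⟫ := mul_le_mul_of_nonneg_left h1 hγ.le
        have h5 : ⟪gs, w' - xstar⟫ = ⟪w' - xstar, gs⟫ := real_inner_comm _ _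
        nlinarith [sq_nonneg ‖w' - xstar‖, h4]
      calc (γ : EReal) * (as : EReal) + ((1 / 2 * ‖xstar - zs‖ ^ 2 : ℝ) : EReal)
          = ((γ * as + 1/2 * ‖xstar - zs‖^2 : ℝ) : EReal) := by push_cast; ring
        _ ≤ ((γ * b + 1/2 * ‖w' - zs‖^2 : ℝ) : EReal) := by exact_mod_cast hgoal
        _ = (γ : EReal) * (b : EReal) + ((1 / 2 * ‖w' - zs‖ ^ 2 : ℝ) : EReal) := by
            push_cast; ring
  have hQs0 : 0 ≤ Qs := by
    rw [hQsdef, aux_quad_dot]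
    have := hLdagPSD.dotProduct_mulVec_nonneg (fun i => gs i)
    simpa using this
  -- the one-step inequality
  have hkey : ∀ x : Vec d,
      (∑ S : Finset (Fin d), μsamp.prob S *
        ‖proxR (x - γ • mact (Lh * μsamp.sketch S * Ldh) (gradient f x)) - xstar‖^2)
      ≤ (1 - γ*mu) * ‖x - xstar‖^2 + 2*γ^2*(Lt*Qs) := by
    intro x
    set g : Vec d := gradient f x with hgdef
    set v : Vec d := x - xstar with hv
    set hh : Vec d := g - gs with hhh
    set D : ℝ := f x - f xstar - ⟪gs, v⟫ with hD
    have hD0 : mu/2 * ‖v‖^2 ≤ D := by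
      have h1 := hsc x xstar
      rw [← hgs, ← hv] at h1
      rw [hD]
      linarith
    have hDpos : 0 ≤ D := le_trans (by positivity) hD0
    have hcross : D + mu/2 * ‖v‖^2 ≤ ⟪hh, v⟫ := by
      have h1 := hsc xstar x
      rw [← hgdef] at h1
      have e1 : ⟪g, xstar - x⟫ = -⟪g, v⟫ := by
        rw [hv, show xstar - x = -(x - xstar) by module, inner_neg_right]
      have e2 : ‖xstar - x‖ = ‖v‖ := by rw [hv, norm_sub_rev]
      rw [e1, e2] at h1
      have e3 : ⟪hh, v⟫ = ⟪g, v⟫ - ⟪gs, v⟫ := by rw [hhh, inner_sub_left]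
      rw [e3, hD]
      linarith
    have hcoco : quad Ldag hh ≤ 2 * D := by
      set wc : Vec d := x - mact Ldag hh with hwc
      have hsm := hsmooth wc x
      rw [← hgdef] at hsm
      have e1 : wc - x = -(mact Ldag hh) := by rw [hwc]; module
      rw [e1, inner_neg_right] at hsm
      have e3 : quad LL (mact Ldag hh) = quad Ldag hh := by
        rw [quad, ← aux_mact_mul, hLLLdag, aux_mact_one]
        rw [quad, real_inner_comm]
      have e2 : quad LL (-(mact Ldag hh)) = quad Ldag hh := by
        rw [show -(mact Ldag hh) = (-1 : ℝ) • (mact Ldag hh) by module, aux_quad_smul, e3]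
        ring
      rw [e2] at hsm
      have hgi := hsc wc xstar
      rw [← hgs] at hgi
      have e4 : ⟪gs, wc - xstar⟫ = ⟪gs, v⟫ - ⟪gs, mact Ldag hh⟫ := by
        rw [show wc - xstar = v - mact Ldag hh by rw [hwc, hv]; module, inner_sub_right]
      rw [e4] at hgi
      have e5 : ⟪g, mact Ldag hh⟫ - ⟪gs, mact Ldag hh⟫ = quad Ldag hh := by
        rw [← inner_sub_left, ← hhh, quad, real_inner_comm]
      have hnn : 0 ≤ mu/2 * ‖wc - xstar‖^2 := by positivity
      rw [hD]
      linarith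
    -- plain vectors
    set gp : Fin d → ℝ := fun i => g i with hgp
    set gsp : Fin d → ℝ := fun i => gs i with hgsp
    set vp : Fin d → ℝ := fun i => v i with hvp
    set hp : Fin d → ℝ := fun i => hh i with hhp
    set qg : Fin d → ℝ := Ldh.mulVec gp with hqg
    set qh : Fin d → ℝ := Ldh.mulVec hp with hqh
    set qs : Fin d → ℝ := Ldh.mulVec gsp with hqs
    -- per-S bound via prox nonexpansiveness
    have hstep : ∀ S : Finset (Fin d),
        ‖proxR (x - γ • mact (Lh * μsamp.sketch S * Ldh) g) - xstar‖^2
        ≤ ‖v‖^2 - 2*(γ * ⟪v, mact (Lh * μsamp.sketch S * Ldh) g - gs⟫)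
            + γ^2 * ‖mact (Lh * μsamp.sketch S * Ldh) g - gs‖^2 := by
      intro S
      set zS : Vec d := x - γ • mact (Lh * μsamp.sketch S * Ldh) g with hzS
      have hd1 : ‖proxR zS - proxR zs‖ ≤ ‖zS - zs‖ := prox_dist hR hγ (hprox zS) (hprox zs)
      rw [← hfix] at hd1
      have hd2 : ‖proxR zS - xstar‖^2 ≤ ‖zS - zs‖^2 :=
        pow_le_pow_left₀ (norm_nonneg _) hd1 2
      have e1 : zS - zs = v - γ • (mact (Lh * μsamp.sketch S * Ldh) g - gs) := by
        rw [hzS, hzs, hv]; module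
      rw [e1, aux_norm_comb'] at hd2
      exact hd2
    -- sum the per-S bounds
    have hsum1 : (∑ S : Finset (Fin d), μsamp.prob S *
          ‖proxR (x - γ • mact (Lh * μsamp.sketch S * Ldh) g) - xstar‖^2)
        ≤ ∑ S : Finset (Fin d), μsamp.prob S *
            (‖v‖^2 - 2*(γ * ⟪v, mact (Lh * μsamp.sketch S * Ldh) g - gs⟫)
              + γ^2 * ‖mact (Lh * μsamp.sketch S * Ldh) g - gs‖^2) :=
      Finset.sum_le_sum fun S _ => mul_le_mul_of_nonneg_left (hstep S) (μsamp.nonneg S)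
    -- expectation of the linear term
    have hI : ∑ S : Finset (Fin d), μsamp.prob S *
        ⟪v, mact (Lh * μsamp.sketch S * Ldh) g - gs⟫ = ⟪hh, v⟫ := by
      have e1 : ∀ S : Finset (Fin d), ⟪v, mact (Lh * μsamp.sketch S * Ldh) g - gs⟫
          = vp ⬝ᵥ Lh.mulVec (fun m => bbf μsamp S m * qg m) - ⟪v, gs⟫ := by
        intro S
        rw [inner_sub_right]
        congr 1
        rw [aux_inner_mact]
        congr 1
        rw [← Matrix.mulVec_mulVec, ← Matrix.mulVec_mulVec, aux_sketch_mulVec]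
      simp only [e1, mul_sub]
      rw [Finset.sum_sub_distrib,
        aux_exp_lin μsamp.prob (bbf μsamp) (aux_moment1 μsamp) Lh vp qg,
        ← Finset.sum_mul, μsamp.total, one_mul]
      rw [hqg, Matrix.mulVec_mulVec, hLhLdh, Matrix.one_mulVec]
      have e6 : vp ⬝ᵥ gp = ⟪v, g⟫ := by
        rw [hvp, hgp]
        exact (aux_inner_dot v g).symm
      have e7 : ⟪hh, v⟫ = ⟪v, g⟫ - ⟪v, gs⟫ := by
        rw [hhh, inner_sub_left, real_inner_comm g v, real_inner_comm gs v]
      rw [e6, e7]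
    -- expectation of the quadratic terms
    have hwdec : ∀ S : Finset (Fin d), mact (Lh * μsamp.sketch S * Ldh) g - gs
        = mact (Lh * μsamp.sketch S * Ldh) hh + (mact (Lh * μsamp.sketch S * Ldh) gs - gs) := by
      intro S
      rw [hhh, aux_mact_sub]
      module
    have hA : ∑ S : Finset (Fin d), μsamp.prob S *
        ‖mact (Lh * μsamp.sketch S * Ldh) hh‖^2 ≤ Lb * (2*D) := by
      have e1 : ∀ S : Finset (Fin d), ‖mact (Lh * μsamp.sketch S * Ldh) hh‖^2
          = (fun m => bbf μsamp S m * qh m) ⬝ᵥ LL.mulVec (fun m => bbf μsamp S m * qh m) := by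
        intro S
        rw [aux_norm_sq_dot, aux_mact_coords]
        rw [← Matrix.mulVec_mulVec, ← Matrix.mulVec_mulVec, aux_sketch_mulVec]
        exact hdotLh _ _
      simp only [e1]
      rw [aux_exp_quad μsamp.prob (bbf μsamp) μsamp.Pbar LL (aux_moment2 μsamp) qh]
      have h2 := aux_rayleigh_le (Matrix.hadamard μsamp.Pbar LL) qh
      rw [← hLbdef] at h2
      have h3 : qh ⬝ᵥ qh = quad Ldag hh := by
        rw [hqh, hdotLdh hp hp, aux_quad_dot, hhp]
      rw [h3] at h2
      have h4 : Lb * quad Ldag hh ≤ Lb * (2*D) :=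
        mul_le_mul_of_nonneg_left hcoco hLb0.le
      linarith
    have hB : ∑ S : Finset (Fin d), μsamp.prob S *
        ‖mact (Lh * μsamp.sketch S * Ldh) gs - gs‖^2 ≤ Lt * Qs := by
      have e1 : ∀ S : Finset (Fin d), ‖mact (Lh * μsamp.sketch S * Ldh) gs - gs‖^2
          = (fun m => (bbf μsamp S m - 1) * qs m) ⬝ᵥ
              LL.mulVec (fun m => (bbf μsamp S m - 1) * qs m) := by
        intro S
        rw [aux_norm_sq_dot]
        have e2 : (fun i => (mact (Lh * μsamp.sketch S * Ldh) gs - gs) i)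
            = Lh.mulVec (fun m => (bbf μsamp S m - 1) * qs m) := by
          have e3 : (fun i => (mact (Lh * μsamp.sketch S * Ldh) gs - gs) i)
              = (Lh * μsamp.sketch S * Ldh).mulVec gsp - gsp := rfl
          have e4 : (Lh * μsamp.sketch S * Ldh).mulVec gsp
              = Lh.mulVec (fun m => bbf μsamp S m * qs m) := by
            rw [← Matrix.mulVec_mulVec, ← Matrix.mulVec_mulVec, aux_sketch_mulVec]
          have e5 : gsp = Lh.mulVec qs := by
            rw [hqs, Matrix.mulVec_mulVec, hLhLdh, Matrix.one_mulVec]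
          have e6 : (fun m => (bbf μsamp S m - 1) * qs m)
              = (fun m => bbf μsamp S m * qs m) - qs := by
            funext m
            show (bbf μsamp S m - 1) * qs m = bbf μsamp S m * qs m - qs m
            ring
          rw [e3, e4, e6, Matrix.mulVec_sub, ← e5]
        rw [e2]
        exact hdotLh _ _
      simp only [e1]
      rw [aux_exp_quad μsamp.prob (fun S m => bbf μsamp S m - 1) μsamp.Ptilde LL
        (aux_moment2t μsamp) qs]
      have h2 := aux_rayleigh_le (Matrix.hadamard μsamp.Ptilde LL) qs
      rw [← hLtdef] at h2
      have h3 : qs ⬝ᵥ qs = Qs := by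
        rw [hqs, hdotLdh gsp gsp, hQsdef, aux_quad_dot, hgsp]
      rw [h3] at h2
      exact h2
    -- combine
    have hexp : ∑ S : Finset (Fin d), μsamp.prob S *
          (‖v‖^2 - 2*(γ * ⟪v, mact (Lh * μsamp.sketch S * Ldh) g - gs⟫)
            + γ^2 * ‖mact (Lh * μsamp.sketch S * Ldh) g - gs‖^2)
        = ‖v‖^2 - 2*γ*⟪hh, v⟫
          + γ^2 * (∑ S : Finset (Fin d), μsamp.prob S *
              ‖mact (Lh * μsamp.sketch S * Ldh) g - gs‖^2) := by
      have e0 : ∀ S : Finset (Fin d), μsamp.prob S *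
            (‖v‖^2 - 2*(γ * ⟪v, mact (Lh * μsamp.sketch S * Ldh) g - gs⟫)
              + γ^2 * ‖mact (Lh * μsamp.sketch S * Ldh) g - gs‖^2)
          = μsamp.prob S * ‖v‖^2
            - 2*γ*(μsamp.prob S * ⟪v, mact (Lh * μsamp.sketch S * Ldh) g - gs⟫)
            + γ^2 * (μsamp.prob S * ‖mact (Lh * μsamp.sketch S * Ldh) g - gs‖^2) := by
        intro S; ring
      simp only [e0]
      rw [Finset.sum_add_distrib, Finset.sum_sub_distrib, ← Finset.sum_mul, μsamp.total,
        one_mul, ← Finset.mul_sum, ← Finset.mul_sum, hI]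
    have hquadsum : ∑ S : Finset (Fin d), μsamp.prob S *
          ‖mact (Lh * μsamp.sketch S * Ldh) g - gs‖^2
        ≤ 2 * (Lb * (2*D)) + 2 * (Lt * Qs) := by
      have h1 : ∀ S : Finset (Fin d), μsamp.prob S *
            ‖mact (Lh * μsamp.sketch S * Ldh) g - gs‖^2
          ≤ μsamp.prob S * (2 * ‖mact (Lh * μsamp.sketch S * Ldh) hh‖^2
              + 2 * ‖mact (Lh * μsamp.sketch S * Ldh) gs - gs‖^2) := by
        intro S
        refine mul_le_mul_of_nonneg_left ?_ (μsamp.nonneg S)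
        rw [hwdec S]
        exact aux_sq_add _ _
      calc ∑ S : Finset (Fin d), μsamp.prob S *
            ‖mact (Lh * μsamp.sketch S * Ldh) g - gs‖^2
          ≤ ∑ S : Finset (Fin d), μsamp.prob S *
              (2 * ‖mact (Lh * μsamp.sketch S * Ldh) hh‖^2
                + 2 * ‖mact (Lh * μsamp.sketch S * Ldh) gs - gs‖^2) :=
            Finset.sum_le_sum fun S _ => h1 S
        _ = 2 * (∑ S : Finset (Fin d), μsamp.prob S *
              ‖mact (Lh * μsamp.sketch S * Ldh) hh‖^2)
            + 2 * (∑ S : Finset (Fin d), μsamp.prob S *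
              ‖mact (Lh * μsamp.sketch S * Ldh) gs - gs‖^2) := by
            rw [Finset.mul_sum, Finset.mul_sum, ← Finset.sum_add_distrib]
            exact Finset.sum_congr rfl fun S _ => by ring
        _ ≤ 2 * (Lb * (2*D)) + 2 * (Lt * Qs) := by
            have h2 : (0:ℝ) ≤ 2 := by norm_num
            linarith [hA, hB]
    -- final arithmetic
    have hfinal : ‖v‖^2 - 2*γ*⟪hh, v⟫
          + γ^2 * (∑ S : Finset (Fin d), μsamp.prob S *
              ‖mact (Lh * μsamp.sketch S * Ldh) g - gs‖^2)
        ≤ (1 - γ*mu) * ‖v‖^2 + 2*γ^2*(Lt*Qs) := by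
      have h1 : -2*γ*⟪hh, v⟫ ≤ -2*γ*(D + mu/2 * ‖v‖^2) := by nlinarith [hcross, hγ]
      have h2 : γ^2 * (∑ S : Finset (Fin d), μsamp.prob S *
            ‖mact (Lh * μsamp.sketch S * Ldh) g - gs‖^2)
          ≤ γ^2 * (2 * (Lb * (2*D)) + 2 * (Lt * Qs)) := by
        exact mul_le_mul_of_nonneg_left hquadsum (by positivity)
      have h3 : (4*γ^2*Lb - 2*γ) * D ≤ 0 := by
        apply mul_nonpos_of_nonpos_of_nonneg _ hDpos
        nlinarith [hγ, hγLb]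
      nlinarith [h1, h2, h3]
    calc (∑ S : Finset (Fin d), μsamp.prob S *
          ‖proxR (x - γ • mact (Lh * μsamp.sketch S * Ldh) g) - xstar‖^2)
        ≤ _ := hsum1
      _ = _ := hexp
      _ ≤ (1 - γ*mu) * ‖v‖^2 + 2*γ^2*(Lt*Qs) := hfinal
  -- induction on k
  induction k with
  | zero =>
    rw [trajExp_zero, pow_zero, one_mul]
    have hc : 0 ≤ 2 * γ * Lt / mu * Qs := by
      apply mul_nonneg _ hQs0
      apply div_nonneg _ hmu.le
      positivity
    linarith
  | succ k ih =>
    set c : ℝ := 2*γ^2*(Lt*Qs) with hcdef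
    have h1 : (∑ ω : Fin k → Finset (Fin d), (∏ i, μsamp.prob (ω i)) *
          (∑ s : Finset (Fin d), μsamp.prob s *
            ‖proxR ((traj x0 (fun x S => proxR (x - γ • mact (Lh * μsamp.sketch S * Ldh)
              (gradient f x))) k ω) - γ • mact (Lh * μsamp.sketch s * Ldh)
              (gradient f (traj x0 (fun x S => proxR (x - γ • mact (Lh * μsamp.sketch S * Ldh)
              (gradient f x))) k ω))) - xstar‖^2))
        ≤ ∑ ω : Fin k → Finset (Fin d), (∏ i, μsamp.prob (ω i)) *
            ((1 - γ*mu) * ‖(traj x0 (fun x S => proxR (x - γ • mact (Lh * μsamp.sketch S * Ldh)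
              (gradient f x))) k ω) - xstar‖^2 + c) := by
      refine Finset.sum_le_sum fun ω _ => ?_
      refine mul_le_mul_of_nonneg_left ?_ (Finset.prod_nonneg fun i _ => μsamp.nonneg _)
      exact hkey _
    have h2 : (∑ ω : Fin k → Finset (Fin d), (∏ i, μsamp.prob (ω i)) *
          ((1 - γ*mu) * ‖(traj x0 (fun x S => proxR (x - γ • mact (Lh * μsamp.sketch S * Ldh)
            (gradient f x))) k ω) - xstar‖^2 + c))
        = (1 - γ*mu) * trajExp μsamp.prob x0
            (fun x S => proxR (x - γ • mact (Lh * μsamp.sketch S * Ldh) (gradient f x)))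
            (fun x => ‖x - xstar‖ ^ 2) k + c := by
      rw [trajExp]
      rw [Finset.mul_sum]
      have e0 : ∀ ω : Fin k → Finset (Fin d), (∏ i, μsamp.prob (ω i)) *
            ((1 - γ*mu) * ‖(traj x0 (fun x S => proxR (x - γ • mact (Lh * μsamp.sketch S * Ldh)
              (gradient f x))) k ω) - xstar‖^2 + c)
          = (1 - γ*mu) * ((∏ i, μsamp.prob (ω i)) *
              ‖(traj x0 (fun x S => proxR (x - γ • mact (Lh * μsamp.sketch S * Ldh)
                (gradient f x))) k ω) - xstar‖^2)
            + (∏ i, μsamp.prob (ω i)) * c := by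
        intro ω; ring
      simp only [e0]
      rw [Finset.sum_add_distrib, ← Finset.sum_mul, aux_sum_prod_one _ μsamp.total, one_mul]
    calc trajExp μsamp.prob x0
          (fun x S => proxR (x - γ • mact (Lh * μsamp.sketch S * Ldh) (gradient f x)))
          (fun x => ‖x - xstar‖ ^ 2) (k+1)
        = _ := trajExp_succ _ _ _ _ k
      _ ≤ _ := h1
      _ = _ := h2
      _ ≤ (1 - γ*mu) * ((1 - γ*mu)^k * ‖x0 - xstar‖^2 + 2 * γ * Lt / mu * Qs) + c := by
          have := mul_le_mul_of_nonneg_left ih hβ0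
          linarith
      _ = (1 - γ*mu)^(k+1) * ‖x0 - xstar‖^2 + 2 * γ * Lt / mu * Qs := by
          rw [hcdef]
          field_simp
          ring
end
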